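/- (Theorem 2) Define recursively on x > 0: ℏ_{K,K}(x) = 2^{R_K^Σ} − x, and for 1 ≤ k ≤ K−1, ℏ_{K,k}(x) = ∫_x^{2^{R_k^Σ}} t^{−1}·ℏ_{K,k+1}(t) dt. Define coefficients: c_{K,0} = 2^{R_K^Σ}; and for 1 ≤ k ≤ K−1: c_{k,i} = −c_{k+1,i−1}/i for i ∈ {1, …, K−k}, and c_{k,0} = Σ_{i=0}^{K−k−1} c_{k+1,i}·(ln(2^{R_k^Σ}))^{i+1}/(i+1) + (−1)^{K−k}·2^{R_k^Σ}. Then for every k ∈ {1, …, K} and every x > 0, ℏ_{K,k}(x) = (−1)^{K−k+1}·x + Σ_{i=0}^{K−k} c_{k,i}·(ln x)^i. -/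

import Mathlib

open MeasureTheory Real Filter

/-- `hbarXP Rs K j x = ℏ_{K, K−j}(x)`, defined by downward recursion:
`ℏ_{K,K}(x) = 2^{R_K^Σ} − x` and, for `1 ≤ k ≤ K−1`,
`ℏ_{K,k}(x) = ∫_x^{2^{R_k^Σ}} t⁻¹·ℏ_{K,k+1}(t) dt`. -/
noncomputable def hbarXP (Rs : ℕ → ℝ) (K : ℕ) : ℕ → ℝ → ℝ
  | 0, x => (2:ℝ) ^ Rs K - x
  | (j + 1), x => ∫ t in x..((2:ℝ) ^ Rs (K - (j + 1))), t⁻¹ * hbarXP Rs K j t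

/-- `cXP Rs K j i = c_{K−j, i}`: `c_{K,0} = 2^{R_K^Σ}`, and for `1 ≤ k ≤ K−1`,
`c_{k,i} = −c_{k+1,i−1}/i` for `i ∈ {1,…,K−k}` and
`c_{k,0} = Σ_{i=0}^{K−k−1} c_{k+1,i}·(ln 2^{R_k^Σ})^{i+1}/(i+1) + (−1)^{K−k}·2^{R_k^Σ}`. -/
noncomputable def cXP (Rs : ℕ → ℝ) (K : ℕ) : ℕ → ℕ → ℝ
  | 0, i => if i = 0 then (2:ℝ) ^ Rs K else 0
  | (j + 1), 0 =>
      (∑ i ∈ Finset.range (j + 1),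
        cXP Rs K j i * (Real.log ((2:ℝ) ^ Rs (K - (j + 1)))) ^ (i + 1) / (i + 1))
      + (-1 : ℝ) ^ (j + 1) * (2:ℝ) ^ Rs (K - (j + 1))
  | (j + 1), (i + 1) => - cXP Rs K j i / (i + 1)

lemma hbar_aux (Rs : ℕ → ℝ) (K : ℕ) :
    ∀ j : ℕ, ∀ x : ℝ, 0 < x →
      hbarXP Rs K j x = (-1:ℝ) ^ (j+1) * x
        + ∑ i ∈ Finset.range (j+1), cXP Rs K j i * (Real.log x) ^ i := by
  intro j
  induction j with
  | zero =>
    intro x hx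
    simp [hbarXP, cXP]
    ring
  | succ j ih =>
    intro x hx
    have hb0 : (0:ℝ) < (2:ℝ) ^ Rs (K - (j+1)) := Real.rpow_pos_of_pos (by norm_num) _
    set b : ℝ := (2:ℝ) ^ Rs (K - (j+1)) with hbdef
    set F : ℝ → ℝ := fun t => (-1:ℝ)^(j+1) * t
      + ∑ i ∈ Finset.range (j+1), cXP Rs K j i * (Real.log t)^(i+1) / ((i:ℝ)+1) with hF
    set f : ℝ → ℝ := fun t => (-1:ℝ)^(j+1)
      + ∑ i ∈ Finset.range (j+1), cXP Rs K j i * (Real.log t)^i * t⁻¹ with hf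
    have hpos : ∀ t ∈ Set.uIcc x b, 0 < t := by
      intro t ht
      rw [Set.mem_uIcc] at ht
      rcases ht with ⟨h1, _⟩ | ⟨h1, _⟩
      · exact lt_of_lt_of_le hx h1
      · exact lt_of_lt_of_le hb0 h1
    have hderiv : ∀ t ∈ Set.uIcc x b, HasDerivAt F (f t) t := by
      intro t ht
      have ht0 : t ≠ 0 := (hpos t ht).ne'
      have h1 : HasDerivAt (fun t : ℝ => (-1:ℝ)^(j+1) * t) ((-1:ℝ)^(j+1)) t := by
        simpa using (hasDerivAt_id t).const_mul ((-1:ℝ)^(j+1))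
      have h2 : ∀ i ∈ Finset.range (j+1),
          HasDerivAt (fun t : ℝ => cXP Rs K j i * (Real.log t)^(i+1) / ((i:ℝ)+1))
            (cXP Rs K j i * (Real.log t)^i * t⁻¹) t := by
        intro i _
        have hlog : HasDerivAt Real.log t⁻¹ t := Real.hasDerivAt_log ht0
        have hp : HasDerivAt (fun t : ℝ => (Real.log t)^(i+1))
            ((↑(i+1) : ℝ) * (Real.log t)^i * t⁻¹) t := by
          simpa using hlog.fun_pow (i+1)
        have := (hp.const_mul (cXP Rs K j i)).div_const ((i:ℝ)+1)
        refine this.congr_deriv ?_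
        have hne : ((i:ℝ)+1) ≠ 0 := by positivity
        push_cast
        rw [div_eq_iff hne]
        ring
      have h3 := HasDerivAt.fun_sum h2
      simpa [hF, hf] using h1.fun_add h3
    have hcont : ContinuousOn f (Set.uIcc x b) := by
      apply ContinuousOn.add continuousOn_const
      apply continuousOn_finset_sum
      intro i _
      have hlog : ContinuousOn Real.log (Set.uIcc x b) :=
        Real.continuousOn_log.mono (fun t ht => by
          simp [Set.mem_compl_singleton_iff, (hpos t ht).ne'])
      have hinv : ContinuousOn (fun t : ℝ => t⁻¹) (Set.uIcc x b) :=
        ContinuousOn.inv₀ continuousOn_id (fun t ht => (hpos t ht).ne')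
      exact ((continuousOn_const.mul (hlog.pow i)).mul hinv)
    have hint : IntervalIntegrable f volume x b := hcont.intervalIntegrable
    have h1 : hbarXP Rs K (j+1) x = ∫ t in x..b, f t := by
      rw [show hbarXP Rs K (j+1) x = ∫ t in x..b, t⁻¹ * hbarXP Rs K j t from rfl]
      apply intervalIntegral.integral_congr
      intro t ht
      have ht0 : t ≠ 0 := (hpos t ht).ne'
      show t⁻¹ * hbarXP Rs K j t = f t
      rw [ih t (hpos t ht), hf, mul_add, Finset.mul_sum]
      congr 1
      · field_simp
      · apply Finset.sum_congr rfl
        intro i _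
        field_simp
    rw [h1, intervalIntegral.integral_eq_sub_of_hasDerivAt hderiv hint]
    -- algebra
    rw [Finset.sum_range_succ']
    have e1 : ∑ i ∈ Finset.range (j+1), cXP Rs K (j+1) (i+1) * (Real.log x)^(i+1)
        = -∑ i ∈ Finset.range (j+1), cXP Rs K j i * (Real.log x)^(i+1) / ((i:ℝ)+1) := by
      rw [← Finset.sum_neg_distrib]
      apply Finset.sum_congr rfl
      intro i _
      show -cXP Rs K j i / ((i:ℕ)+1 : ℝ) * (Real.log x)^(i+1) = _
      push_cast
      ring
    rw [e1]
    have e2 : cXP Rs K (j+1) 0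
        = (∑ i ∈ Finset.range (j+1), cXP Rs K j i * (Real.log b)^(i+1) / ((i:ℝ)+1))
          + (-1:ℝ)^(j+1) * b := by
      show (∑ i ∈ Finset.range (j+1), cXP Rs K j i * (Real.log b)^(i+1) / ((i:ℕ)+1 : ℝ))
          + (-1:ℝ)^(j+1) * b = _
      push_cast
      ring
    rw [e2, hF]
    simp only []
    push_cast
    ring

/-- **Theorem 2.** For every `k ∈ {1,…,K}` and every `x > 0`,
`ℏ_{K,k}(x) = (−1)^{K−k+1}·x + Σ_{i=0}^{K−k} c_{k,i}·(ln x)^i`. -/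
theorem hbar_recursive_formula
    (K : ℕ) (hK : 1 ≤ K) (R : ℕ → ℝ) (hR : ∀ k ∈ Finset.Icc 1 K, 0 < R k) :
    ∀ k ∈ Finset.Icc 1 K, ∀ x : ℝ, 0 < x →
      hbarXP (fun m => ∑ l ∈ Finset.Icc 1 m, R l) K (K - k) x
        = (-1 : ℝ) ^ (K - k + 1) * x
          + ∑ i ∈ Finset.range (K - k + 1),
              cXP (fun m => ∑ l ∈ Finset.Icc 1 m, R l) K (K - k) i
                * (Real.log x) ^ i := by
  intro k _ x hx
  exact hbar_aux _ K (K - k) x hx
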